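/- (Nonlinear time scaling for subsolutions via Lambert W.) Fix α, γ, λ > 0 with γ + λ - αγ > 0, set ξ = γ + λ - αγ, and define f(t) = t + ξ - αγ · W((ξ/(αγ)) e^{(t+ξ)/(αγ)}) for t ≥ 0, where W is the principal branch of the Lambert W function. Then: (a) f(0) = 0; (b) f'(t) = αγ/h(t) where h(t) = αγ(1 + W((ξ/(αγ)) e^{(t+ξ)/(αγ)})) = t - f(t) + γ + λ, f'' < 0, and f'(0) = αγ/(γ+λ); (c) h satisfies the differential relation h·h'/(h - αγ) = 1 with h(0) = γ + λ, hence (h/(h - αγ))h' ≥ 1; (d) f(t) ≤ t for all t ≥ 0 and 0 < f'(t) < 1 when α < 1 + λ/γ and αγ < h(t). -/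

import Mathlib

open Real

/-- Nonlinear time scaling for subsolutions via Lambert W: with
`ξ = γ + λ - αγ > 0`, `f(t) = t + ξ - αγ W((ξ/(αγ))e^{(t+ξ)/(αγ)})` and
`h(t) = αγ(1 + W((ξ/(αγ))e^{(t+ξ)/(αγ)}))`, where `W` is the principal branch of
the Lambert W function, we have: (a) `f(0) = 0`; (b) `h(t) = t - f(t) + γ + λ`,
`f'(t) = αγ/h(t)`, `f'' < 0`, `f'(0) = αγ/(γ+λ)`, `h(0) = γ+λ`;
(c) `(h/(h-αγ))h' = 1`, hence `≥ 1`; (d) `f(t) ≤ t`, and `0 < f' < 1` when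
`α < 1 + λ/γ` and `αγ < h(t)`. -/
theorem stmt15 (α γ lam : ℝ) (hα : 0 < α) (hγ : 0 < γ) (hlam : 0 < lam)
    (hξ : 0 < γ + lam - α * γ)
    (W : ℝ → ℝ)
    (hW1 : ∀ x : ℝ, -1 ≤ x → W (x * Real.exp x) = x)
    (hW2 : ∀ z : ℝ, -Real.exp (-1) ≤ z → W z * Real.exp (W z) = z ∧ -1 ≤ W z)
    (f h : ℝ → ℝ)
    (hf : ∀ t, f t = t + (γ + lam - α * γ) -
      α * γ * W ((γ + lam - α * γ) / (α * γ) *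
        Real.exp ((t + (γ + lam - α * γ)) / (α * γ))))
    (hh : ∀ t, h t = α * γ * (1 + W ((γ + lam - α * γ) / (α * γ) *
        Real.exp ((t + (γ + lam - α * γ)) / (α * γ))))) :
    f 0 = 0 ∧
    (∀ t, 0 ≤ t → h t = t - f t + γ + lam) ∧
    (∀ t, 0 ≤ t → deriv f t = α * γ / h t) ∧
    (∀ t, 0 ≤ t → deriv (deriv f) t < 0) ∧
    deriv f 0 = α * γ / (γ + lam) ∧
    h 0 = γ + lam ∧
    (∀ t, 0 ≤ t → (h t / (h t - α * γ)) * deriv h t = 1) ∧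
    (∀ t, 0 ≤ t → 1 ≤ (h t / (h t - α * γ)) * deriv h t) ∧
    (∀ t, 0 ≤ t → f t ≤ t) ∧
    (∀ t, 0 ≤ t → α < 1 + lam / γ → α * γ < h t →
      0 < deriv f t ∧ deriv f t < 1) := by
  have hapos : 0 < α * γ := mul_pos hα hγ
  set a := α * γ with ha
  set ξ := γ + lam - α * γ with hxi
  have hane : a ≠ 0 := ne_of_gt hapos
  set z : ℝ → ℝ := fun s => ξ / a * Real.exp ((s + ξ) / a) with hz
  set g : ℝ → ℝ := fun s => W (z s) with hg
  have hfe : ∀ s, f s = s + ξ - a * g s := fun s => hf s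
  have hhe : ∀ s, h s = a * (1 + g s) := fun s => hh s
  have hzpos : ∀ s, 0 < z s := fun s => mul_pos (div_pos hξ hapos) (Real.exp_pos _)
  have hWz : ∀ s, g s * Real.exp (g s) = z s ∧ -1 ≤ g s := by
    intro s
    exact hW2 (z s) (le_of_lt (lt_trans (neg_neg_of_pos (Real.exp_pos _)) (hzpos s)))
  have hgpos : ∀ s, 0 < g s := by
    intro s
    by_contra hle
    push_neg at hle
    have h1 := (hWz s).1
    have h2 := hzpos s
    nlinarith [Real.exp_pos (g s)]
  -- the functional equation : a * log (g s) + a * g s - (a * log (ξ/a) + ξ) = s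
  have hT : ∀ s, a * Real.log (g s) + a * g s - (a * Real.log (ξ / a) + ξ) = s := by
    intro s
    have h1 := congrArg Real.log (hWz s).1
    rw [Real.log_mul (ne_of_gt (hgpos s)) (Real.exp_ne_zero _), Real.log_exp,
      Real.log_mul (ne_of_gt (div_pos hξ hapos)) (Real.exp_ne_zero _), Real.log_exp] at h1
    have h2 : a * ((s + ξ) / a) = s + ξ := by field_simp
    nlinarith [h1]
  -- g is Lipschitz
  have hlipkey : ∀ s s', g s ≤ g s' → g s' - g s ≤ a⁻¹ * |s - s'| := by
    intro s s' hle
    have hlog := Real.log_le_log (hgpos s) hle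
    have h1 := hT s
    have h2 := hT s'
    have h3 : a * (g s' - g s) ≤ s' - s := by nlinarith
    have h4 : s' - s ≤ |s - s'| := by
      rw [abs_sub_comm]; exact le_abs_self _
    have h5 : a * (g s' - g s) ≤ |s - s'| := le_trans h3 h4
    calc g s' - g s = a⁻¹ * (a * (g s' - g s)) := by field_simp
      _ ≤ a⁻¹ * |s - s'| := mul_le_mul_of_nonneg_left h5 (le_of_lt (inv_pos.2 hapos))
  have hlip : LipschitzWith ⟨a⁻¹, le_of_lt (inv_pos.2 hapos)⟩ g := by
    apply LipschitzWith.of_dist_le_mul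
    intro s s'
    simp only [Real.dist_eq, NNReal.coe_mk]
    rcases le_total (g s) (g s') with hle | hle
    · rw [abs_sub_comm, abs_of_nonneg (sub_nonneg.2 hle)]
      exact hlipkey s s' hle
    · rw [abs_of_nonneg (sub_nonneg.2 hle)]
      calc g s - g s' ≤ a⁻¹ * |s' - s| := hlipkey s' s hle
        _ = a⁻¹ * |s - s'| := by rw [abs_sub_comm]
  -- derivative of g
  have key : ∀ t : ℝ, HasDerivAt g (g t / (a * (1 + g t))) t := by
    intro t
    have hu := hgpos t
    have hTd : HasDerivAt (fun u => a * Real.log u + a * u - (a * Real.log (ξ / a) + ξ))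
        (a * (g t)⁻¹ + a * 1) (g t) :=
      (((Real.hasDerivAt_log (ne_of_gt hu)).const_mul a).add
        ((hasDerivAt_id (g t)).const_mul a)).sub_const _
    have hne : a * (g t)⁻¹ + a * 1 ≠ 0 := by positivity
    have hinv := hTd.of_local_left_inverse hlip.continuous.continuousAt hne
      (Filter.Eventually.of_forall hT)
    have heq : g t / (a * (1 + g t)) = (a * (g t)⁻¹ + a * 1)⁻¹ := by
      rw [eq_comm, inv_eq_iff_eq_inv, eq_comm, inv_div]
      field_simp <;> ring
    rw [heq]
    exact hinv
  -- derivative of f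
  have hfd : ∀ t : ℝ, HasDerivAt f (a / (a * (1 + g t))) t := by
    intro t
    have hu := hgpos t
    have h1 : HasDerivAt (fun s => s + ξ - a * g s)
        (1 - a * (g t / (a * (1 + g t)))) t :=
      ((hasDerivAt_id t).add_const ξ).sub ((key t).const_mul a)
    have h2 : HasDerivAt f (1 - a * (g t / (a * (1 + g t)))) t :=
      h1.congr_of_eventuallyEq (Filter.Eventually.of_forall hfe)
    convert h2 using 1
    field_simp
    ring
  -- derivative of h
  have hH : ∀ t : ℝ, HasDerivAt h (g t / (1 + g t)) t := by
    intro t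
    have hu := hgpos t
    have h1 : HasDerivAt (fun s => a * (1 + g s)) (a * (g t / (a * (1 + g t)))) t := by
      have := ((key t).const_add 1).const_mul a
      simpa using this
    have h2 : HasDerivAt h (a * (g t / (a * (1 + g t)))) t :=
      h1.congr_of_eventuallyEq (Filter.Eventually.of_forall hhe)
    convert h2 using 1
    field_simp
  have hhpos : ∀ t, 0 < h t := by
    intro t
    rw [hhe t]
    have := hgpos t
    positivity
  have hdfh : ∀ t : ℝ, deriv f t = a / h t := by
    intro t
    rw [(hfd t).deriv, hhe t]
  -- g 0 = ξ / a
  have hg0 : g 0 = ξ / a := by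
    have : z 0 = ξ / a * Real.exp (ξ / a) := by
      simp only [hz]
      norm_num
    rw [hg]
    simp only [this]
    exact hW1 (ξ / a) (le_trans (by norm_num) (le_of_lt (div_pos hξ hapos)))
  have hf0 : f 0 = 0 := by
    rw [hfe 0, hg0]
    field_simp
    ring
  have hh0 : h 0 = γ + lam := by
    rw [hhe 0, hg0]
    field_simp
    ring
  -- second derivative
  have hdf : deriv f = fun t => a / h t := funext hdfh
  have hdd : ∀ t : ℝ, deriv (deriv f) t < 0 := by
    intro t
    have hu := hgpos t
    have hd2 : HasDerivAt (fun s => a / h s)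
        ((0 * h t - a * (g t / (1 + g t))) / h t ^ 2) t :=
      (hasDerivAt_const t a).div (hH t) (ne_of_gt (hhpos t))
    rw [hdf, hd2.deriv]
    have h1 : 0 < g t / (1 + g t) := div_pos hu (by linarith)
    have h2 : 0 < h t ^ 2 := pow_pos (hhpos t) 2
    have : 0 * h t - a * (g t / (1 + g t)) < 0 := by nlinarith
    exact div_neg_of_neg_of_pos this h2
  -- the ODE for h
  have hode : ∀ t : ℝ, (h t / (h t - a)) * deriv h t = 1 := by
    intro t
    have hu := hgpos t
    rw [(hH t).deriv, hhe t]
    have h1 : a * (1 + g t) - a = a * g t := by ring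
    rw [h1]
    field_simp
  -- g t ≥ ξ / a for t ≥ 0
  have hge : ∀ t, 0 ≤ t → ξ / a ≤ g t := by
    intro t ht
    by_contra hlt
    push_neg at hlt
    have hlog := Real.log_lt_log (hgpos t) hlt
    have hc : a * (ξ / a) = ξ := by field_simp
    nlinarith [hT t]
  refine ⟨hf0, ?_, ?_, fun t _ => hdd t, ?_, hh0, fun t _ => hode t, ?_, ?_, ?_⟩
  · intro t _
    rw [hhe t, hfe t]
    ring
  · intro t _
    exact hdfh t
  · rw [hdfh 0, hh0]
  · intro t ht
    rw [hode t]
  · intro t ht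
    have := hge t ht
    have hc : a * (ξ / a) = ξ := by field_simp
    rw [hfe t]
    nlinarith
  · intro t ht _ hlt
    constructor
    · rw [hdfh t]
      exact div_pos hapos (hhpos t)
    · rw [hdfh t]
      rw [div_lt_one (hhpos t)]
      exact hlt
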